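/- Let S(t) be a C₀-semigroup on a separable Hilbert space H, Q^{1/2}: U → H Hilbert–Schmidt, and fix t > 0 and h ∈ H. Define v_h(r) = (Q^{1/2})* S(t−r)* γ_t† h for r ∈ [0,t], where γ_t = ∫₀ᵗ S(s)Q^{1/2}(Q^{1/2})* S(s)* ds and h lies in Ran(γ_t). Then ∫₀ᵗ S(t−r) Q^{1/2} v_h(r) dr = γ_t γ_t† h, which equals the orthogonal projection of h onto the closure of Ran(γ_t); in particular it equals h when h ∈ Ran(γ_t). -/

import Mathlib

open MeasureTheory ContinuousLinearMap

/-- Covering property: with `v_h(r) = (Q^{1/2})* S(t-r)* γ_t† h`,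
`∫₀ᵗ S(t−r) Q^{1/2} v_h(r) dr = γ_t γ_t† h`, the orthogonal projection of `h` onto
the closure of `Ran γ_t`; in particular it equals `h` for `h ∈ Ran γ_t`. -/
theorem covering_property
    {H U : Type*}
    [NormedAddCommGroup H] [InnerProductSpace ℝ H] [CompleteSpace H]
    [TopologicalSpace.SeparableSpace H]
    [NormedAddCommGroup U] [InnerProductSpace ℝ U] [CompleteSpace U]
    [TopologicalSpace.SeparableSpace U]
    (S : ℝ → H →L[ℝ] H) (Q : U →L[ℝ] H)
    (hS0 : S 0 = 1)
    (hSsemi : ∀ t s : ℝ, 0 ≤ t → 0 ≤ s → S (t + s) = (S t).comp (S s))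
    (hScont : ∀ x : H, Continuous fun r : ℝ => S r x)
    {κ : Type*} (f : HilbertBasis κ ℝ U)
    (hQHS : Summable fun k : κ => ‖Q (f k)‖ ^ 2)
    (t : ℝ) (ht : 0 < t)
    (hintOp : IntervalIntegrable
      (fun s : ℝ => (S s).comp (Q.comp ((adjoint Q).comp (adjoint (S s)))))
      volume 0 t)
    (γt : H →L[ℝ] H)
    (hγ : γt = ∫ s in (0:ℝ)..t,
      (S s).comp (Q.comp ((adjoint Q).comp (adjoint (S s)))))
    (γd : H →ₗ[ℝ] H)
    (hγd : ∀ x ∈ (LinearMap.ker (γt : H →ₗ[ℝ] H))ᗮ, γd (γt x) = x)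
    (h : H) (hh : h ∈ LinearMap.range (γt : H →ₗ[ℝ] H))
    (vh : ℝ → U)
    (hvh : ∀ r : ℝ, vh r = adjoint Q (adjoint (S (t - r)) (γd h)))
    (hintVec : IntervalIntegrable (fun r : ℝ => S (t - r) (Q (vh r))) volume 0 t) :
    haveI : CompleteSpace (LinearMap.range (γt : H →ₗ[ℝ] H)).topologicalClosure :=
      (LinearMap.range (γt : H →ₗ[ℝ] H)).isClosed_topologicalClosure.completeSpace_coe
    (∫ r in (0:ℝ)..t, S (t - r) (Q (vh r))) = γt (γd h) ∧
    γt (γd h) = (Submodule.orthogonalProjectionOnto (LinearMap.range (γt : H →ₗ[ℝ] H)).topologicalClosure h : H) ∧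
    γt (γd h) = h := by
  -- First show γt (γd h) = h
  obtain ⟨x, rfl⟩ := hh
  have hker : IsClosed (LinearMap.ker (γt : H →ₗ[ℝ] H) : Set H) :=
    isClosed_eq (γt.continuous) continuous_const
  haveI : CompleteSpace (LinearMap.ker (γt : H →ₗ[ℝ] H)) := hker.completeSpace_coe
  obtain ⟨y, hy, z, hz, rfl⟩ :=
    (LinearMap.ker (γt : H →ₗ[ℝ] H)).exists_add_mem_mem_orthogonal x
  have hγy : γt y = 0 := hy
  have key : γt (γd (γt (y + z))) = γt (y + z) := by
    have h1 : γt (y + z) = γt z := by simp [map_add, hγy]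
    rw [h1, hγd z hz]
  refine ⟨?_, ?_, key⟩
  · -- integral computation
    have h2 : ∀ r : ℝ, S (t - r) (Q (vh r)) =
        ((S (t - r)).comp (Q.comp ((adjoint Q).comp (adjoint (S (t - r))))))
          (γd (γt (y + z))) := by
      intro r; rw [hvh r]; rfl
    calc (∫ r in (0:ℝ)..t, S (t - r) (Q (vh r)))
        = ∫ r in (0:ℝ)..t,
            ((S (t - r)).comp (Q.comp ((adjoint Q).comp (adjoint (S (t - r))))))
              (γd (γt (y + z))) := by
          exact intervalIntegral.integral_congr fun r _ => h2 r
      _ = ∫ s in (0:ℝ)..t,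
            ((S s).comp (Q.comp ((adjoint Q).comp (adjoint (S s)))))
              (γd (γt (y + z))) := by
          have := intervalIntegral.integral_comp_sub_left
            (a := (0:ℝ)) (b := t)
            (f := fun s : ℝ =>
              ((S s).comp (Q.comp ((adjoint Q).comp (adjoint (S s)))))
                (γd (γt (y + z)))) t
          simpa using this
      _ = γt (γd (γt (y + z))) := by
          rw [hγ]
          exact (ContinuousLinearMap.intervalIntegral_apply hintOp _).symm
  · refine key.trans ?_
    exact (Submodule.starProjection_eq_self_iff.mpr
      ((LinearMap.range (γt : H →ₗ[ℝ] H)).le_topologicalClosure ⟨y + z, rfl⟩)).symm
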